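/- Let L be a finite-dimensional Lie algebra of breadth 2 over a field of characteristic ≠ 2, and let A be an abelian ideal of L with b_A(L) = 2. Then dim [A,L] = 2. -/
import Mathlib


open Module

/-- The breadth of an element `x`: the rank of `ad x`. -/
noncomputable def elemBreadth (F : Type*) {L : Type*} [Field F] [LieRing L] [LieAlgebra F L]
    (x : L) : ℕ :=
  finrank F (LinearMap.range (LieAlgebra.ad F L x))

/-- `L` has breadth `n`: `n` is the maximum of the ranks of the maps `ad x`, `x ∈ L`. -/
def HasBreadth (F L : Type*) [Field F] [LieRing L] [LieAlgebra F L] (n : ℕ) : Prop :=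
  (∀ x : L, elemBreadth F x ≤ n) ∧ ∃ x : L, elemBreadth F x = n

theorem stmt10 (F L : Type*) [Field F] [LieRing L] [LieAlgebra F L]
    [FiniteDimensional F L] (hchar : ringChar F ≠ 2)
    (hb : HasBreadth F L 2) (A : LieIdeal F L) (hA : IsLieAbelian A)
    (hbA : (∀ x : L,
        finrank F (LinearMap.range ((LieAlgebra.ad F L x).domRestrict A.toSubmodule)) ≤ 2) ∧
      ∃ x : L,
        finrank F (LinearMap.range ((LieAlgebra.ad F L x).domRestrict A.toSubmodule)) = 2) :
    finrank F (⁅A, (⊤ : LieIdeal F L)⁆ : LieIdeal F L) = 2 := by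
  obtain ⟨x, hx⟩ := hbA.2
  set W : Submodule F L :=
    LinearMap.range ((LieAlgebra.ad F L x).domRestrict A.toSubmodule) with hW
  -- abelian facts
  have habel : ∀ a b : L, a ∈ A → b ∈ A → ⁅a, b⁆ = 0 := by
    intro a b ha hb'
    have := hA.trivial (⟨a, ha⟩ : A) (⟨b, hb'⟩ : A)
    exact congrArg (Subtype.val) this
  -- generic: if range of ad z restricted to A equals W (dim 2), then range (ad z) = W
  have key : ∀ z : L,
      LinearMap.range ((LieAlgebra.ad F L z).domRestrict A.toSubmodule) = W →
      LinearMap.range (LieAlgebra.ad F L z) = W := by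
    intro z hz
    have hle : W ≤ LinearMap.range (LieAlgebra.ad F L z) := by
      rw [← hz]
      rintro w ⟨a, rfl⟩
      exact ⟨a, rfl⟩
    have hrk : finrank F (LinearMap.range (LieAlgebra.ad F L z)) ≤ finrank F W := by
      have h1 := hb.1 z
      unfold elemBreadth at h1
      rw [hW, hx]
      exact h1
    exact (Submodule.eq_of_le_of_finrank_le hle hrk).symm
  have hxrange : LinearMap.range (LieAlgebra.ad F L x) = W := key x rfl
  -- for a ∈ A, ad (x + a) restricted to A equals ad x restricted to A
  have hshift : ∀ a : L, a ∈ A →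
      LinearMap.range (LieAlgebra.ad F L (x + a)) = W := by
    intro a ha
    apply key
    have : (LieAlgebra.ad F L (x + a)).domRestrict A.toSubmodule
        = (LieAlgebra.ad F L x).domRestrict A.toSubmodule := by
      ext b
      simp only [LinearMap.domRestrict_apply, LieAlgebra.ad_apply, add_lie]
      rw [habel a b ha b.2, add_zero]
    rw [this]
  -- hence every bracket [a, y] with a ∈ A lies in W
  have hbr : ∀ a y : L, a ∈ A → ⁅a, y⁆ ∈ W := by
    intro a y ha
    have h1 : ⁅x + a, y⁆ ∈ W := hshift a ha ▸ ⟨y, rfl⟩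
    have h2 : ⁅x, y⁆ ∈ W := hxrange ▸ ⟨y, rfl⟩
    have : ⁅a, y⁆ = ⁅x + a, y⁆ - ⁅x, y⁆ := by rw [add_lie]; abel
    rw [this]
    exact W.sub_mem h1 h2
  -- now show the ideal [A, ⊤] has toSubmodule = W
  have hideal : LieSubmodule.toSubmodule (⁅A, (⊤ : LieIdeal F L)⁆ : LieIdeal F L) = W := by
    apply le_antisymm
    · rw [LieSubmodule.lieIdeal_oper_eq_linear_span]
      apply Submodule.span_le.2
      rintro w ⟨a, y, rfl⟩
      exact hbr a y a.2
    · rintro w ⟨b, rfl⟩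
      simp only [LinearMap.domRestrict_apply, LieAlgebra.ad_apply]
      have : ⁅x, (b : L)⁆ = -⁅(b : L), x⁆ := by rw [lie_skew]
      rw [this]
      exact Submodule.neg_mem _
        (LieSubmodule.lie_mem_lie b.2 (LieSubmodule.mem_top x))
  have hfin : finrank F (LieSubmodule.toSubmodule (⁅A, (⊤ : LieIdeal F L)⁆ : LieIdeal F L))
      = finrank F W := by rw [hideal]
  calc finrank F (⁅A, (⊤ : LieIdeal F L)⁆ : LieIdeal F L)
      = finrank F (LieSubmodule.toSubmodule (⁅A, (⊤ : LieIdeal F L)⁆ : LieIdeal F L)) := rfl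
    _ = finrank F W := hfin
    _ = 2 := hx
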